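/- Let G be a finite group of order divisible by 2^d with |G| = 2^d m, m odd. Then in any normal Cayley graph of G, a set of pairwise strongly cospectral vertices has size at most 2^d. -/

import Mathlib

open Matrix

/-- `E` is the orthogonal projection onto the eigenspace of `A` for the eigenvalue `μ`. -/
def IsEigenProjection {V : Type*} [Fintype V] (A : Matrix V V ℝ) (μ : ℝ)
    (E : Matrix V V ℝ) : Prop :=
  E * E = E ∧ E.IsSymm ∧
    (∀ x : V → ℝ, A.mulVec (E.mulVec x) = μ • E.mulVec x) ∧
    (∀ y : V → ℝ, A.mulVec y = μ • y → E.mulVec y = y)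

/-- Vertices `u` and `v` are strongly cospectral: `E e_u = ± E e_v` for every spectral
idempotent `E` of `A`. -/
def StronglyCospectral {V : Type*} [Fintype V] [DecidableEq V]
    (A : Matrix V V ℝ) (u v : V) : Prop :=
  ∀ (μ : ℝ) (E : Matrix V V ℝ), IsEigenProjection A μ E →
    E.mulVec (Pi.single u 1) = E.mulVec (Pi.single v 1) ∨
    E.mulVec (Pi.single u 1) = -E.mulVec (Pi.single v 1)

/-- The adjacency matrix of the Cayley graph `X(G, C)`: `g ~ h` iff `h * g⁻¹ ∈ C`. -/
def cayleyAdj {G : Type*} [Group G] [Fintype G] [DecidableEq G] (C : Finset G) :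
    Matrix G G ℝ :=
  Matrix.of fun g h => if h * g⁻¹ ∈ C then 1 else 0

namespace Stmt8Aux

section Spec

variable {V : Type*} [Fintype V] [DecidableEq V] {A : Matrix V V ℝ}

lemma sum_mulVec {ι : Type*} (s : Finset ι) (f : ι → Matrix V V ℝ) (x : V → ℝ) :
    (∑ i ∈ s, f i).mulVec x = ∑ i ∈ s, (f i).mulVec x := by
  classical
  induction s using Finset.induction with
  | empty => simp [Matrix.mulVec, dotProduct]
  | insert _ _ h ih => simp [Finset.sum_insert h, Matrix.add_mulVec, ih]

/-- matrices agreeing on all `mulVec` are equal -/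
lemma eq_of_mulVec_eq {E F : Matrix V V ℝ} (h : ∀ x, E.mulVec x = F.mulVec x) : E = F := by
  ext i j
  have := congrFun (h (Pi.single j 1)) i
  simpa [Matrix.mulVec_single] using this

/-- spectral projection attached to a hermitian matrix and a real number -/
noncomputable def proj (hA : A.IsHermitian) (μ : ℝ) : Matrix V V ℝ :=
  (hA.eigenvectorUnitary : Matrix V V ℝ) *
    Matrix.diagonal (fun i => if hA.eigenvalues i = μ then (1 : ℝ) else 0) *
    star (hA.eigenvectorUnitary : Matrix V V ℝ)

lemma spectral (hA : A.IsHermitian) :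
    A = (hA.eigenvectorUnitary : Matrix V V ℝ) * Matrix.diagonal hA.eigenvalues *
      star (hA.eigenvectorUnitary : Matrix V V ℝ) := by
  have h := hA.spectral_theorem
  rwa [show RCLike.ofReal ∘ hA.eigenvalues = hA.eigenvalues by
    funext i; simp [RCLike.ofReal_real_eq_id]] at h

lemma proj_isEigenProjection (hA : A.IsHermitian) (μ : ℝ) :
    IsEigenProjection A μ (proj hA μ) := by
  set U : Matrix V V ℝ := (hA.eigenvectorUnitary : Matrix V V ℝ) with hUdef
  have hU1 : U * star U = 1 := (Matrix.mem_unitaryGroup_iff).mp hA.eigenvectorUnitary.2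
  have hU2 : star U * U = 1 := (Matrix.mem_unitaryGroup_iff').mp hA.eigenvectorUnitary.2
  set χ : Matrix V V ℝ :=
    Matrix.diagonal (fun i => if hA.eigenvalues i = μ then (1 : ℝ) else 0) with hχdef
  have hχχ : χ * χ = χ := by
    rw [hχdef, Matrix.diagonal_mul_diagonal]
    refine congrArg Matrix.diagonal (funext fun i => ?_)
    by_cases h : hA.eigenvalues i = μ <;> simp [h]
  have hDχ : Matrix.diagonal hA.eigenvalues * χ = μ • χ := by
    rw [hχdef, Matrix.diagonal_mul_diagonal, ← Matrix.diagonal_smul]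
    refine congrArg Matrix.diagonal (funext fun i => ?_)
    by_cases h : hA.eigenvalues i = μ <;> simp [h]
  have hprojdef : proj hA μ = U * χ * star U := rfl
  refine ⟨?_, ?_, ?_, ?_⟩
  · rw [hprojdef]
    calc U * χ * star U * (U * χ * star U)
        = U * χ * (star U * U) * χ * star U := by simp only [mul_assoc]
      _ = U * χ * star U := by rw [hU2]; simp only [mul_one, hχχ, mul_assoc]
    -- note: after hU2 we get U * χ * 1 * χ * star U; handle via simp
  · show (proj hA μ)ᵀ = proj hA μ
    have : (proj hA μ)ᴴ = proj hA μ := by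
      rw [hprojdef]
      simp only [Matrix.conjTranspose_mul, Matrix.conjTranspose_conjTranspose]
      rw [show χᴴ = χ by
        rw [hχdef, Matrix.diagonal_conjTranspose]
        refine congrArg Matrix.diagonal (funext fun i => ?_)
        by_cases h : hA.eigenvalues i = μ <;> simp [h]]
      simp only [mul_assoc]
      rfl
    rw [← Matrix.conjTranspose_eq_transpose_of_trivial, this]
  · intro x
    have hAE : A * proj hA μ = μ • proj hA μ := by
      rw [hprojdef, spectral hA]
      calc U * Matrix.diagonal hA.eigenvalues * star U * (U * χ * star U)
          = U * (Matrix.diagonal hA.eigenvalues * (star U * U) * χ) * star U := by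
            simp only [mul_assoc]
        _ = U * (Matrix.diagonal hA.eigenvalues * χ) * star U := by
            rw [hU2, mul_one]
        _ = μ • (U * χ * star U) := by
            simp only [hDχ, Matrix.mul_smul, Matrix.smul_mul, mul_assoc]
    rw [Matrix.mulVec_mulVec, hAE, Matrix.smul_mulVec]
  · intro y hy
    set z : V → ℝ := (star U).mulVec y with hz
    have hyz : U.mulVec z = y := by
      rw [hz, Matrix.mulVec_mulVec, hU1, Matrix.one_mulVec]
    have hDz : (Matrix.diagonal hA.eigenvalues).mulVec z = μ • z := by
      have h1 : A.mulVec (U.mulVec z) = μ • (U.mulVec z) := by rw [hyz]; exact hy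
      rw [spectral hA, ← hUdef] at h1
      have h2 := congrArg (star U).mulVec h1
      simp only [Matrix.mulVec_mulVec, Matrix.mulVec_smul] at h2
      simp only [← mul_assoc] at h2
      rwa [hU2, one_mul, Matrix.one_mulVec, mul_assoc, hU2, mul_one] at h2
    have hχz : χ.mulVec z = z := by
      funext i
      have hdi := congrFun hDz i
      rw [Matrix.mulVec_diagonal] at hdi
      rw [hχdef, Matrix.mulVec_diagonal]
      by_cases h : hA.eigenvalues i = μ
      · simp [h]
      · simp only [h, if_false, zero_mul]
        have : (hA.eigenvalues i - μ) * z i = 0 := by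
          have : μ • z i = μ * z i := rfl
          rw [sub_mul]
          simp only [Pi.smul_apply, smul_eq_mul] at hdi
          rw [hdi]
          ring
        rcases mul_eq_zero.mp this with h' | h'
        · exact absurd (by linarith [sub_eq_zero.mp h']) h
        · exact h'.symm
    rw [hprojdef, ← Matrix.mulVec_mulVec, ← Matrix.mulVec_mulVec, ← hz, hχz, hyz]

lemma sum_proj (hA : A.IsHermitian) :
    ∑ μ ∈ Finset.univ.image hA.eigenvalues, proj hA μ = 1 := by
  set U : Matrix V V ℝ := (hA.eigenvectorUnitary : Matrix V V ℝ) with hUdef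
  have hU1 : U * star U = 1 := (Matrix.mem_unitaryGroup_iff).mp hA.eigenvectorUnitary.2
  have key : ∑ μ ∈ Finset.univ.image hA.eigenvalues,
      Matrix.diagonal (fun i => if hA.eigenvalues i = μ then (1 : ℝ) else 0) = 1 := by
    ext i j
    rw [Matrix.sum_apply]
    by_cases h : i = j
    · subst h
      simp only [Matrix.diagonal_apply_eq, Matrix.one_apply_eq]
      rw [Finset.sum_ite_eq (Finset.univ.image hA.eigenvalues) (hA.eigenvalues i)
        (fun _ => (1 : ℝ))]
      simp [Finset.mem_image]
    · simp [Matrix.diagonal_apply_ne _ h, Matrix.one_apply_ne h]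
  calc ∑ μ ∈ Finset.univ.image hA.eigenvalues, proj hA μ
      = U * (∑ μ ∈ Finset.univ.image hA.eigenvalues,
          Matrix.diagonal (fun i => if hA.eigenvalues i = μ then (1 : ℝ) else 0)) * star U := by
        rw [Finset.mul_sum, Finset.sum_mul]
        rfl
    _ = 1 := by rw [key, mul_one, hU1]

/-- completeness: if every eigenprojection agrees on two vectors, they are equal -/
lemma eq_of_forall_proj (hA : A.IsHermitian) {x y : V → ℝ}
    (h : ∀ (μ : ℝ) (E : Matrix V V ℝ), IsEigenProjection A μ E →
      E.mulVec x = E.mulVec y) : x = y := by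
  have h1 : (1 : Matrix V V ℝ).mulVec x = (1 : Matrix V V ℝ).mulVec y := by
    rw [← sum_proj hA, sum_mulVec, sum_mulVec]
    exact Finset.sum_congr rfl fun μ _ => h μ _ (proj_isEigenProjection hA μ)
  simpa [Matrix.one_mulVec] using h1

/-- eigenprojections are unique -/
lemma eigenProjection_unique {μ : ℝ} {E F : Matrix V V ℝ}
    (hE : IsEigenProjection A μ E) (hF : IsEigenProjection A μ F) : E = F := by
  have hEF : E * F = F := eq_of_mulVec_eq fun x => by
    rw [← Matrix.mulVec_mulVec]
    exact hE.2.2.2 _ (hF.2.2.1 x)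
  have hFE : F * E = E := eq_of_mulVec_eq fun x => by
    rw [← Matrix.mulVec_mulVec]
    exact hF.2.2.2 _ (hE.2.2.1 x)
  have := congrArg Matrix.transpose hFE
  rw [Matrix.transpose_mul, hE.2.1.eq, hF.2.1.eq] at this
  rw [← this, hEF]

/-- an orthogonal matrix commuting with `A` commutes with each eigenprojection -/
lemma proj_comm {μ : ℝ} {E P : Matrix V V ℝ} (hE : IsEigenProjection A μ E)
    (hP1 : P * Pᵀ = 1) (hP2 : Pᵀ * P = 1) (hPA : P * A = A * P) :
    P * E = E * P := by
  have hAE : A * E = μ • E := eq_of_mulVec_eq fun x => by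
    rw [← Matrix.mulVec_mulVec, hE.2.2.1, Matrix.smul_mulVec]
  have hATP : A * Pᵀ = Pᵀ * A := by
    have h1 : Pᵀ * (P * A) * Pᵀ = Pᵀ * (A * P) * Pᵀ := by rw [hPA]
    rwa [← mul_assoc, hP2, one_mul, mul_assoc, mul_assoc, hP1, mul_one] at h1
  have hF : IsEigenProjection A μ (P * E * Pᵀ) := by
    refine ⟨?_, ?_, ?_, ?_⟩
    · have hEE : E * (E * Pᵀ) = E * Pᵀ := by rw [← mul_assoc, hE.1]
      calc P * E * Pᵀ * (P * E * Pᵀ) = P * (E * ((Pᵀ * P) * (E * Pᵀ))) := by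
            simp only [mul_assoc]
      _ = P * (E * (E * Pᵀ)) := by rw [hP2, one_mul]
      _ = P * E * Pᵀ := by rw [hEE, mul_assoc]
    · show (P * E * Pᵀ)ᵀ = P * E * Pᵀ
      rw [Matrix.transpose_mul, Matrix.transpose_mul, Matrix.transpose_transpose,
        hE.2.1.eq, mul_assoc]
    · intro x
      have : A * (P * E * Pᵀ) = μ • (P * E * Pᵀ) := by
        calc A * (P * E * Pᵀ) = (A * P) * E * Pᵀ := by simp only [mul_assoc]
          _ = P * (A * E) * Pᵀ := by rw [← hPA]; simp only [mul_assoc]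
          _ = μ • (P * E * Pᵀ) := by
              simp only [hAE, Matrix.mul_smul, Matrix.smul_mul, mul_assoc]
      rw [Matrix.mulVec_mulVec, this, Matrix.smul_mulVec]
    · intro y hy
      have h2 : A.mulVec (Pᵀ.mulVec y) = μ • Pᵀ.mulVec y := by
        rw [Matrix.mulVec_mulVec, hATP, ← Matrix.mulVec_mulVec, hy, Matrix.mulVec_smul]
      have h3 : E.mulVec (Pᵀ.mulVec y) = Pᵀ.mulVec y := hE.2.2.2 _ h2
      rw [← Matrix.mulVec_mulVec, ← Matrix.mulVec_mulVec, h3, Matrix.mulVec_mulVec,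
        hP1, Matrix.one_mulVec]
  have h := eigenProjection_unique hE hF
  have h2 : E * P = (P * E * Pᵀ) * P := by rw [← h]
  rw [h2, mul_assoc, mul_assoc, hP2, mul_one]

end Spec

section Cayley

variable {G : Type*} [Group G] [Fintype G] [DecidableEq G]

/-- permutation matrix of right multiplication by `w` -/
def RMat (w : G) : Matrix G G ℝ := Matrix.of fun g h => if h = g * w then 1 else 0

/-- permutation matrix of left multiplication by `w` -/
def LMat (w : G) : Matrix G G ℝ := Matrix.of fun g h => if h = w * g then 1 else 0

lemma RMat_mulVec (w : G) (x : G → ℝ) : (RMat w).mulVec x = fun g => x (g * w) := by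
  funext g
  simp [RMat, Matrix.mulVec, dotProduct, ite_mul]

lemma LMat_mulVec (w : G) (x : G → ℝ) : (LMat w).mulVec x = fun g => x (w * g) := by
  funext g
  simp [LMat, Matrix.mulVec, dotProduct, ite_mul]

lemma RMat_mulVec_single (w u : G) :
    (RMat w).mulVec (Pi.single u 1) = Pi.single (u * w⁻¹) 1 := by
  rw [RMat_mulVec]; funext g
  simp only [Pi.single_apply]
  congr 1
  simp [eq_mul_inv_iff_mul_eq]

lemma LMat_mulVec_single (w u : G) :
    (LMat w).mulVec (Pi.single u 1) = Pi.single (w⁻¹ * u) 1 := by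
  rw [LMat_mulVec]; funext g
  simp only [Pi.single_apply]
  congr 1
  simp [eq_inv_mul_iff_mul_eq]

lemma RMat_transpose (w : G) : (RMat w)ᵀ = RMat w⁻¹ := by
  ext g h
  simp only [Matrix.transpose_apply, RMat, Matrix.of_apply]
  congr 1
  simp [eq_comm, eq_mul_inv_iff_mul_eq]

lemma LMat_transpose (w : G) : (LMat w)ᵀ = LMat w⁻¹ := by
  ext g h
  simp only [Matrix.transpose_apply, LMat, Matrix.of_apply]
  congr 1
  simp [eq_comm, eq_inv_mul_iff_mul_eq]

lemma RMat_mul_RMat (w w' : G) : RMat w * RMat w' = RMat (w * w') := by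
  ext g h
  simp only [Matrix.mul_apply, RMat, Matrix.of_apply]
  rw [Finset.sum_eq_single (g * w)] <;> simp +contextual [mul_assoc]

lemma LMat_mul_LMat (w w' : G) : LMat w * LMat w' = LMat (w' * w) := by
  ext g h
  simp only [Matrix.mul_apply, LMat, Matrix.of_apply]
  rw [Finset.sum_eq_single (w * g)] <;> simp +contextual [mul_assoc]

lemma RMat_one : RMat (1 : G) = 1 := by
  ext g h
  simp [RMat, Matrix.one_apply, eq_comm]

lemma LMat_one : LMat (1 : G) = 1 := by
  ext g h
  simp [LMat, Matrix.one_apply, eq_comm]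

variable (C : Finset G)

lemma cayleyAdj_isHermitian (hinv : ∀ c ∈ C, c⁻¹ ∈ C) : (cayleyAdj C).IsHermitian := by
  refine Matrix.ext fun g h => ?_
  simp only [Matrix.conjTranspose_apply, cayleyAdj, Matrix.of_apply, star_trivial]
  have : g * h⁻¹ ∈ C ↔ h * g⁻¹ ∈ C := by
    constructor <;> intro hc
    · simpa [_root_.mul_inv_rev] using hinv _ hc
    · simpa [_root_.mul_inv_rev] using hinv _ hc
  rw [if_congr this rfl rfl]

lemma RMat_comm_cayleyAdj (w : G) : RMat w * cayleyAdj C = cayleyAdj C * RMat w := by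
  ext g h
  simp only [Matrix.mul_apply, RMat, cayleyAdj, Matrix.of_apply]
  rw [Finset.sum_eq_single (g * w) (fun b _ hb => by rw [if_neg hb, zero_mul])
      (fun hmem => absurd (Finset.mem_univ _) hmem),
    Finset.sum_eq_single (h * w⁻¹)
      (fun b _ hb => by
        rw [if_neg (show ¬(h = b * w) from fun hc => hb (eq_mul_inv_iff_mul_eq.mpr hc.symm)),
          mul_zero])
      (fun hmem => absurd (Finset.mem_univ _) hmem)]
  rw [if_pos rfl, if_pos (show h = h * w⁻¹ * w by group), one_mul, mul_one]
  rw [show h * (g * w)⁻¹ = h * w⁻¹ * g⁻¹ by group]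

lemma LMat_comm_cayleyAdj (hnorm : ∀ x : G, ∀ c ∈ C, x⁻¹ * c * x ∈ C) (w : G) :
    LMat w * cayleyAdj C = cayleyAdj C * LMat w := by
  ext g h
  simp only [Matrix.mul_apply, LMat, cayleyAdj, Matrix.of_apply]
  rw [Finset.sum_eq_single (w * g) (fun b _ hb => by rw [if_neg hb, zero_mul])
      (fun hmem => absurd (Finset.mem_univ _) hmem),
    Finset.sum_eq_single (w⁻¹ * h)
      (fun b _ hb => by
        rw [if_neg (show ¬(h = w * b) from fun hc => hb (eq_inv_mul_iff_mul_eq.mpr hc.symm)),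
          mul_zero])
      (fun hmem => absurd (Finset.mem_univ _) hmem)]
  rw [if_pos rfl, if_pos (show h = w * (w⁻¹ * h) by group), one_mul, mul_one]
  have hiff : h * (w * g)⁻¹ ∈ C ↔ w⁻¹ * h * g⁻¹ ∈ C := by
    constructor <;> intro hc
    · have h2 := hnorm w _ hc
      rw [show w⁻¹ * (h * (w * g)⁻¹) * w = w⁻¹ * h * g⁻¹ by group] at h2
      exact h2
    · have h2 := hnorm w⁻¹ _ hc
      rw [show w⁻¹⁻¹ * (w⁻¹ * h * g⁻¹) * w⁻¹ = h * (w * g)⁻¹ by group] at h2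
      exact h2
  rw [if_congr hiff rfl rfl]

lemma RMat_comm_proj {μ : ℝ} {E : Matrix G G ℝ} (hE : IsEigenProjection (cayleyAdj C) μ E)
    (w : G) : RMat w * E = E * RMat w := by
  refine proj_comm hE ?_ ?_ (RMat_comm_cayleyAdj C w)
  · rw [RMat_transpose, RMat_mul_RMat, mul_inv_cancel, RMat_one]
  · rw [RMat_transpose, RMat_mul_RMat, inv_mul_cancel, RMat_one]

lemma LMat_comm_proj (hnorm : ∀ x : G, ∀ c ∈ C, x⁻¹ * c * x ∈ C)
    {μ : ℝ} {E : Matrix G G ℝ} (hE : IsEigenProjection (cayleyAdj C) μ E)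
    (w : G) : LMat w * E = E * LMat w := by
  refine proj_comm hE ?_ ?_ (LMat_comm_cayleyAdj C hnorm w)
  · rw [LMat_transpose, LMat_mul_LMat, inv_mul_cancel, LMat_one]
  · rw [LMat_transpose, LMat_mul_LMat, mul_inv_cancel, LMat_one]

/-- key transport identity: `E e_{u w} = R (E e_u)` -/
lemma proj_single_right {μ : ℝ} {E : Matrix G G ℝ}
    (hE : IsEigenProjection (cayleyAdj C) μ E) (u w : G) :
    E.mulVec (Pi.single (u * w) 1) = (RMat w⁻¹).mulVec (E.mulVec (Pi.single u 1)) := by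
  have h1 : (RMat w⁻¹).mulVec (Pi.single u 1) = Pi.single (u * w) 1 := by
    rw [RMat_mulVec_single, inv_inv]
  rw [← h1, Matrix.mulVec_mulVec, Matrix.mulVec_mulVec, RMat_comm_proj C hE]

lemma proj_single_left (hnorm : ∀ x : G, ∀ c ∈ C, x⁻¹ * c * x ∈ C) {μ : ℝ} {E : Matrix G G ℝ}
    (hE : IsEigenProjection (cayleyAdj C) μ E) (u w : G) :
    E.mulVec (Pi.single (w * u) 1) = (LMat w⁻¹).mulVec (E.mulVec (Pi.single u 1)) := by
  have h1 : (LMat w⁻¹).mulVec (Pi.single u 1) = Pi.single (w * u) 1 := by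
    rw [LMat_mulVec_single, inv_inv]
  rw [← h1, Matrix.mulVec_mulVec, Matrix.mulVec_mulVec, LMat_comm_proj C hnorm hE]

end Cayley

end Stmt8Aux

theorem stmt8 {G : Type*} [Group G] [Fintype G] [DecidableEq G] (d m : ℕ)
    (hcard : Fintype.card G = 2 ^ d * m) (hm : Odd m)
    (C : Finset G) (h1 : (1 : G) ∉ C) (hinv : ∀ c ∈ C, c⁻¹ ∈ C)
    (hnorm : ∀ x : G, ∀ c ∈ C, x⁻¹ * c * x ∈ C)
    (S : Finset G) (hS : ∀ u ∈ S, ∀ v ∈ S, StronglyCospectral (cayleyAdj C) u v) :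
    S.card ≤ 2 ^ d := by
  classical
  have hherm : (cayleyAdj C).IsHermitian := Stmt8Aux.cayleyAdj_isHermitian C hinv
  -- closure under multiplication of the set strongly cospectral to 1
  have hmul : ∀ v w : G, StronglyCospectral (cayleyAdj C) 1 v →
      StronglyCospectral (cayleyAdj C) 1 w → StronglyCospectral (cayleyAdj C) 1 (v * w) := by
    intro v w hv hw μ E hE
    have t1 := Stmt8Aux.proj_single_right C hE v w
    have t2' : E.mulVec (Pi.single w 1) =
        (Stmt8Aux.RMat w⁻¹).mulVec (E.mulVec (Pi.single (1 : G) 1)) := by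
      have h := Stmt8Aux.proj_single_right C hE 1 w
      rwa [one_mul] at h
    rcases hv μ E hE with k | k <;> rcases hw μ E hE with k' | k'
    · left
      rw [k', t2', k]
      simp only [Matrix.mulVec_neg, neg_neg, t1]
    · right
      rw [k', t2', k]
      simp only [Matrix.mulVec_neg, neg_neg, t1]
    · right
      rw [k', t2', k]
      simp only [Matrix.mulVec_neg, neg_neg, t1]
    · left
      rw [k', t2', k]
      simp only [Matrix.mulVec_neg, neg_neg, t1]
  -- squares are trivial
  have hsq : ∀ v : G, StronglyCospectral (cayleyAdj C) 1 v → v * v = 1 := by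
    intro v hv
    have hext : (Pi.single (v * v) (1 : ℝ) : G → ℝ) = Pi.single (1 : G) 1 := by
      apply Stmt8Aux.eq_of_forall_proj hherm
      intro μ E hE
      have t1 := Stmt8Aux.proj_single_left C hnorm hE v v
      have t2 : E.mulVec (Pi.single v 1) =
          (Stmt8Aux.LMat v⁻¹).mulVec (E.mulVec (Pi.single (1 : G) 1)) := by
        have h := Stmt8Aux.proj_single_left C hnorm hE 1 v
        rwa [mul_one] at h
      rcases hv μ E hE with k | k
      · rw [t1, ← k, ← t2, ← k]
      · have k2 : E.mulVec (Pi.single v 1) = -E.mulVec (Pi.single (1 : G) 1) := by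
          rw [k, neg_neg]
        rw [t1, k2]
        simp only [Matrix.mulVec_neg]
        rw [← t2, k2, neg_neg]
    by_contra hne
    have h := congrFun hext (v * v)
    rw [Pi.single_eq_same, Pi.single_apply, if_neg hne] at h
    exact one_ne_zero h
  -- strong cospectrality is preserved by right translation
  have hright : ∀ u v w : G, StronglyCospectral (cayleyAdj C) u v →
      StronglyCospectral (cayleyAdj C) (u * w) (v * w) := by
    intro u v w h μ E hE
    have t1 := Stmt8Aux.proj_single_right C hE u w
    have t2 := Stmt8Aux.proj_single_right C hE v w
    rcases h μ E hE with k | k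
    · left; rw [t1, t2, k]
    · right; rw [t1, t2, k, Matrix.mulVec_neg]
  -- the subgroup of vertices strongly cospectral to 1
  let H : Subgroup G :=
    { carrier := {v | StronglyCospectral (cayleyAdj C) 1 v}
      one_mem' := fun μ E _ => Or.inl rfl
      mul_mem' := fun {a b} ha hb => hmul a b ha hb
      inv_mem' := fun {a} ha => by
        have h2 : a⁻¹ = a := inv_eq_of_mul_eq_one_right (hsq a ha)
        rw [h2]; exact ha }
  have hmemH : ∀ v : G, v ∈ H ↔ StronglyCospectral (cayleyAdj C) 1 v := fun v => Iff.rfl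
  haveI : Fact (Nat.Prime 2) := ⟨Nat.prime_two⟩
  have hp : IsPGroup 2 H := by
    intro g
    refine ⟨1, ?_⟩
    rw [pow_one]
    refine Subtype.ext ?_
    have h2 : (g : G) * (g : G) = 1 := hsq _ ((hmemH _).mp g.2)
    simp [pow_two, h2]
  obtain ⟨n, hn⟩ := IsPGroup.iff_card.mp hp
  have hdvd : Nat.card H ∣ Nat.card G := Subgroup.card_subgroup_dvd_card H
  rw [hn, Nat.card_eq_fintype_card, hcard] at hdvd
  have hcop : Nat.Coprime (2 ^ n) m := Nat.Coprime.pow_left n hm.coprime_two_left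
  have h2d : (2 : ℕ) ^ n ∣ 2 ^ d := hcop.dvd_of_dvd_mul_right hdvd
  have hHle : Nat.card H ≤ 2 ^ d := by
    rw [hn]
    exact Nat.le_of_dvd (pow_pos (by norm_num) d) h2d
  rcases S.eq_empty_or_nonempty with rfl | ⟨g0, hg0⟩
  · simp
  · have himg : ∀ v ∈ S, v * g0⁻¹ ∈ H := by
      intro v hv
      have h := hright g0 v g0⁻¹ (hS g0 hg0 v hv)
      rw [mul_inv_cancel] at h
      exact (hmemH _).mpr h
    have hsub : ↑(S.image (· * g0⁻¹)) ⊆ (H : Set G) := by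
      intro x hx
      simp only [Finset.coe_image, Set.mem_image, Finset.mem_coe] at hx
      obtain ⟨v, hv, rfl⟩ := hx
      exact himg v hv
    calc S.card = (S.image (· * g0⁻¹)).card :=
          (Finset.card_image_of_injective S (mul_left_injective _)).symm
      _ = (↑(S.image (· * g0⁻¹)) : Set G).ncard := (Set.ncard_coe_finset _).symm
      _ ≤ (H : Set G).ncard := Set.ncard_le_ncard hsub (Set.toFinite _)
      _ = Nat.card H := by rw [← Nat.card_coe_set_eq, SetLike.coe_sort_coe]
      _ ≤ 2 ^ d := hHle
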